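/- (Non-existence bound for MSRD codes) Suppose ν = n_1 = … = n_ℓ and m = m_1 = … = m_ℓ, and that there exists an MSRD code 𝒞 ⊆ 𝕄 of minimum sum-rank distance d ≥ 3. Then ℓ ≤ ⌊(d−3)/ν⌋ + ⌊(q^ν − q^{ν⌊(d−3)/ν⌋ + ν − d + 3} + (q−1)(q^m + 1))/(q^ν − 1)⌋ ≤ ⌊(d−3)/ν⌋ + 1 + ⌊q^m(q−1)/(q^ν − 1)⌋. -/

import Mathlib

open Matrix Finset

section SumRank

variable {F : Type*} [Field F] [Fintype F] {ℓ : ℕ} {m n : Fin ℓ → ℕ}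

/-- The sum-rank weight of a tuple of matrices. -/
noncomputable def srk (C : ∀ i : Fin ℓ, Matrix (Fin (m i)) (Fin (n i)) F) : ℕ :=
  ∑ i, (C i).rank

/-- The weighted sum `∑ m i * rank (C i)`. -/
noncomputable def wsum (C : ∀ i : Fin ℓ, Matrix (Fin (m i)) (Fin (n i)) F) : ℕ :=
  ∑ i, m i * (C i).rank

/-- The minimum sum-rank distance of a code. -/
noncomputable def dmin (𝒞 : Submodule F (∀ i : Fin ℓ, Matrix (Fin (m i)) (Fin (n i)) F)) : ℕ :=
  sInf {w | ∃ C ∈ 𝒞, C ≠ 0 ∧ srk C = w}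

/-- The maximum sum-rank weight of a code. -/
noncomputable def maxsrk (𝒞 : Submodule F (∀ i : Fin ℓ, Matrix (Fin (m i)) (Fin (n i)) F)) : ℕ :=
  sSup {w | ∃ C ∈ 𝒞, srk C = w}

/-- An optimal rank-metric anticode in `F^(m×n)`. -/
def IsOptRkAnticode {m n : ℕ} (A : Submodule F (Matrix (Fin m) (Fin n) F)) : Prop :=
  Module.finrank F A = m * sSup {r | ∃ M ∈ A, (M : Matrix (Fin m) (Fin n) F).rank = r}

/-- An optimal sum-rank-metric anticode. -/
def IsOptAnticode (𝒞 : Submodule F (∀ i : Fin ℓ, Matrix (Fin (m i)) (Fin (n i)) F)) : Prop :=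
  Module.finrank F 𝒞 = sSup {w | ∃ C ∈ 𝒞, wsum C = w}

/-- The weight of a code. -/
noncomputable def wtCode (𝒞 : Submodule F (∀ i : Fin ℓ, Matrix (Fin (m i)) (Fin (n i)) F)) : ℕ :=
  sInf {w | ∃ A : ∀ i : Fin ℓ, Submodule F (Matrix (Fin (m i)) (Fin (n i)) F),
    (∀ i, IsOptRkAnticode (A i)) ∧ 𝒞 ≤ Submodule.pi Set.univ A ∧
    w = maxsrk (Submodule.pi Set.univ A)}

/-- The `r`-th generalized sum-rank weight of a code. -/
noncomputable def genWt (𝒞 : Submodule F (∀ i : Fin ℓ, Matrix (Fin (m i)) (Fin (n i)) F))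
    (r : ℕ) : ℕ :=
  sInf {w | ∃ 𝒟 : Submodule F (∀ i : Fin ℓ, Matrix (Fin (m i)) (Fin (n i)) F),
    𝒟 ≤ 𝒞 ∧ r ≤ Module.finrank F 𝒟 ∧ w = wtCode 𝒟}

/-- The trace-dual of a code. -/
def dualCode (𝒞 : Submodule F (∀ i : Fin ℓ, Matrix (Fin (m i)) (Fin (n i)) F)) :
    Submodule F (∀ i : Fin ℓ, Matrix (Fin (m i)) (Fin (n i)) F) where
  carrier := {D | ∀ C ∈ 𝒞, ∑ i, Matrix.trace (D i * (C i)ᵀ) = 0}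
  add_mem' := by
    intro a b ha hb C hC
    have h1 := ha C hC
    have h2 := hb C hC
    simp only [Pi.add_apply, Matrix.add_mul, Matrix.trace_add, Finset.sum_add_distrib,
      Set.mem_setOf_eq] at *
    rw [h1, h2, add_zero]
  zero_mem' := by
    intro C hC
    simp
  smul_mem' := by
    intro r a ha C hC
    have h1 := ha C hC
    simp only [Pi.smul_apply, Matrix.smul_mul, Matrix.trace_smul, ← Finset.smul_sum,
      Set.mem_setOf_eq] at *
    rw [h1, smul_zero]

/-- The MSRD property. -/
def IsMSRD (𝒞 : Submodule F (∀ i : Fin ℓ, Matrix (Fin (m i)) (Fin (n i)) F)) : Prop :=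
  ∃ (j : Fin ℓ) (δ : ℕ), δ ≤ n j - 1 ∧
    dmin 𝒞 = ∑ i ∈ Finset.Iio j, n i + δ + 1 ∧
    Module.finrank F 𝒞 = ∑ i ∈ Finset.Ici j, m i * n i - δ * m j

end SumRank


set_option linter.unusedSectionVars false
set_option maxHeartbeats 2000000

open Module

section Aux
variable {F : Type*} [Field F] [Fintype F]

lemma rank_sub_le' {m n : ℕ} (A B : Matrix (Fin m) (Fin n) F) :
    (A - B).rank ≤ A.rank + B.rank := by
  have h : (A - B).mulVecLin = A.mulVecLin - B.mulVecLin := by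
    apply LinearMap.ext; intro v; simp [Matrix.sub_mulVec]
  have hr : LinearMap.range ((A - B).mulVecLin) ≤
      LinearMap.range A.mulVecLin ⊔ LinearMap.range B.mulVecLin := by
    rw [h]
    rintro x ⟨v, rfl⟩
    exact Submodule.sub_mem _ (Submodule.mem_sup_left ⟨v, rfl⟩)
      (Submodule.mem_sup_right ⟨v, rfl⟩)
  calc (A - B).rank ≤ finrank F ↥(LinearMap.range A.mulVecLin ⊔ LinearMap.range B.mulVecLin) :=
        Submodule.finrank_mono hr
    _ ≤ A.rank + B.rank := Submodule.finrank_add_le_finrank_add_finrank _ _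

lemma rank_vecMulVec_le' {m n : ℕ} (y : Fin m → F) (x : Fin n → F) :
    (Matrix.vecMulVec y x).rank ≤ 1 := by
  rw [Matrix.vecMulVec_eq Unit]
  calc (Matrix.replicateCol Unit y * Matrix.replicateRow Unit x).rank ≤ (Matrix.replicateCol Unit y).rank :=
        Matrix.rank_mul_le_left _ _
    _ ≤ Fintype.card Unit := Matrix.rank_le_card_width _
    _ = 1 := rfl

lemma srk_sub_le {ℓ mm ν : ℕ} (C D : ∀ _ : Fin ℓ, Matrix (Fin mm) (Fin ν) F) :
    srk (C - D) ≤ srk C + srk D := by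
  simp only [srk, ← Finset.sum_add_distrib]
  exact Finset.sum_le_sum fun i _ => rank_sub_le' _ _

lemma srk_single {ℓ mm ν : ℕ} (i : Fin ℓ) (A : Matrix (Fin mm) (Fin ν) F) :
    srk (m := fun _ => mm) (n := fun _ => ν) (Pi.single i A) = A.rank := by
  simp only [srk]
  rw [Finset.sum_eq_single_of_mem i (Finset.mem_univ _)]
  · rw [Pi.single_eq_same]
  · intro b _ hb; rw [Pi.single_eq_of_ne hb, Matrix.rank_zero]

lemma card_ne_zero_vec [DecidableEq F] (k : ℕ) :
    Fintype.card {v : Fin k → F // v ≠ 0} = Fintype.card F ^ k - 1 := by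
  have h1 : Fintype.card {v : Fin k → F // v = 0} = 1 := Fintype.card_subtype_eq 0
  have h2 := Fintype.card_subtype_compl (fun v : Fin k → F => v = 0)
  simp only [h1] at h2
  have h3 : Fintype.card {v : Fin k → F // v ≠ 0} = Fintype.card {x : Fin k → F // ¬ x = 0} :=
    Fintype.card_congr (Equiv.subtypeEquivRight (by intro x; rfl))
  rw [h3, h2, Fintype.card_fun, Fintype.card_fin]

end Aux

set_option maxHeartbeats 2000000 in
lemma main_count {F : Type*} [Field F] [Fintype F] [DecidableEq F] {ℓ mm ν : ℕ}
    (𝒞 : Submodule F (∀ _ : Fin ℓ, Matrix (Fin mm) (Fin ν) F))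
    (a ρ L d : ℕ) (hρν : ρ < ν) (hℓ : ℓ = a + 1 + L)
    (hd : d = a * ν + ρ + 3)
    (hdist : ∀ C ∈ 𝒞, C ≠ 0 → d ≤ srk C)
    (hdim : Module.finrank F 𝒞 + (d - 1) * mm = ℓ * (mm * ν)) :
    L * (Fintype.card F ^ mm - 1) * (Fintype.card F ^ ν - 1)
      + (Fintype.card F ^ mm - 1) * (Fintype.card F ^ (ν - ρ) - 1)
      ≤ (Fintype.card F - 1) * (Fintype.card F ^ (2 * mm) - 1) := by
  classical
  set q := Fintype.card F with hq
  have haℓ : a < ℓ := by omega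
  -- the padding matrix
  set P : Matrix (Fin ρ) (Fin ν) F := fun k c => if (c : ℕ) = (k : ℕ) then 1 else 0 with hP
  have hPzero : ∀ (D : Matrix (Fin mm) (Fin ρ) F) (r : Fin mm) (c : Fin ν),
      ρ ≤ (c : ℕ) → (D * P) r c = 0 := by
    intro D r c hc
    rw [Matrix.mul_apply]
    apply Finset.sum_eq_zero
    intro k _
    have : ¬ ((c : ℕ) = (k : ℕ)) := by have := k.2; omega
    simp [hP, this]
  have hPval : ∀ (D : Matrix (Fin mm) (Fin ρ) F) (r : Fin mm) (k : Fin ρ),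
      (D * P) r ⟨(k : ℕ), lt_trans k.2 hρν⟩ = D r k := by
    intro D r k
    rw [Matrix.mul_apply]
    rw [Finset.sum_eq_single_of_mem k (Finset.mem_univ _)]
    · simp [hP]
    · intro b _ hb
      have : ¬ ((⟨(k : ℕ), lt_trans k.2 hρν⟩ : Fin ν) : ℕ) = (b : ℕ) := by
        simp only []
        intro hh
        exact hb (Fin.ext (by simpa using hh.symm))
      simp [hP, this]
  -- the embedding of the "deleted coordinates" space
  set θ : ((Fin a → Matrix (Fin mm) (Fin ν) F) × Matrix (Fin mm) (Fin ρ) F) →ₗ[F]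
      (∀ _ : Fin ℓ, Matrix (Fin mm) (Fin ν) F) :=
    { toFun := fun y i => if h : (i : ℕ) < a then y.1 ⟨(i : ℕ), h⟩
        else if (i : ℕ) = a then y.2 * P else 0
      map_add' := by
        intro y z
        funext i
        by_cases h1 : (i : ℕ) < a
        · simp [h1]
        · by_cases h2 : (i : ℕ) = a
          · simp [h1, h2, Matrix.add_mul]
          · simp [h1, h2]
      map_smul' := by
        intro c y
        funext i
        by_cases h1 : (i : ℕ) < a
        · simp [h1]
        · by_cases h2 : (i : ℕ) = a
          · simp [h1, h2, Matrix.smul_mul]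
          · simp [h1, h2] } with hθ
  have happ : ∀ y (i : Fin ℓ), θ y i = if h : (i : ℕ) < a then y.1 ⟨(i : ℕ), h⟩
      else if (i : ℕ) = a then y.2 * P else 0 := fun y i => rfl
  have hθsrk : ∀ y, srk (θ y) ≤ a * ν + ρ := by
    intro y
    have hbound : ∀ i : Fin ℓ, (θ y i).rank ≤
        (if (i : ℕ) < a then ν else if (i : ℕ) = a then ρ else 0) := by
      intro i
      rw [happ]
      by_cases h1 : (i : ℕ) < a
      · simp only [dif_pos h1, if_pos h1]
        exact Matrix.rank_le_width _
      · by_cases h2 : (i : ℕ) = a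
        · simp only [dif_neg h1, if_pos h2, if_neg h1]
          exact le_trans (Matrix.rank_mul_le_left _ _) (Matrix.rank_le_width _)
        · simp only [dif_neg h1, if_neg h2, if_neg h1, Matrix.rank_zero, le_refl]
    calc srk (θ y) ≤ ∑ i : Fin ℓ, (if (i : ℕ) < a then ν else if (i : ℕ) = a then ρ else 0) :=
          Finset.sum_le_sum (fun i _ => hbound i)
      _ = a * ν + ρ := by
          rw [Fin.sum_univ_eq_sum_range (fun t => if t < a then ν else if t = a then ρ else 0) ℓ]
          have hsplit : ∀ t ∈ Finset.range ℓ, (if t < a then ν else if t = a then ρ else 0)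
              = (if t < a then ν else 0) + (if t = a then ρ else 0) := by
            intro t _
            by_cases h1 : t < a
            · simp [h1]
              exact fun h => absurd h (by omega)
            · by_cases h2 : t = a
              · simp [h1, h2]
              · simp [h1, h2]
          rw [Finset.sum_congr rfl hsplit, Finset.sum_add_distrib]
          have e1 : ∑ t ∈ Finset.range ℓ, (if t < a then ν else 0) = a * ν := by
            rw [← Finset.sum_filter]
            have : (Finset.range ℓ).filter (fun t => t < a) = Finset.range a := by
              ext t; simp; omega
            rw [this, Finset.sum_const, Finset.card_range, smul_eq_mul]
          have e2 : ∑ t ∈ Finset.range ℓ, (if t = a then ρ else 0) = ρ := by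
            rw [Finset.sum_ite_eq' (Finset.range ℓ) a (fun _ => ρ)]
            simp [haℓ]
          rw [e1, e2]
  have hθinj : Function.Injective θ := by
    intro y z hyz
    have hyz' : ∀ i, θ y i = θ z i := fun i => congrFun hyz i
    ext1
    · funext b
      have := hyz' ⟨(b : ℕ), lt_trans b.2 haℓ⟩
      rw [happ, happ] at this
      simpa [dif_pos (show ((⟨(b : ℕ), lt_trans b.2 haℓ⟩ : Fin ℓ) : ℕ) < a from b.2),
        Fin.eta] using this
    · have := hyz' ⟨a, haℓ⟩
      rw [happ, happ] at this
      simp only [dif_neg (show ¬ ((⟨a, haℓ⟩ : Fin ℓ) : ℕ) < a from by simp),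
        if_pos (show ((⟨a, haℓ⟩ : Fin ℓ) : ℕ) = a from rfl)] at this
      funext r k
      have h2 := congrFun (congrFun this r) ⟨(k : ℕ), lt_trans k.2 hρν⟩
      rw [if_pos trivial, if_pos trivial] at h2
      rwa [hPval, hPval] at h2
  -- quotient by the code
  set π := 𝒞.mkQ with hπ
  have hXfin : finrank F (∀ _ : Fin ℓ, Matrix (Fin mm) (Fin ν) F) = ℓ * (mm * ν) := by
    rw [Module.finrank_pi_fintype]
    simp [Module.finrank_matrix, Finset.sum_const]
  have hfrV : finrank F ((∀ _ : Fin ℓ, Matrix (Fin mm) (Fin ν) F) ⧸ 𝒞) = (d - 1) * mm := by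
    have h1 := Submodule.finrank_quotient_add_finrank 𝒞
    rw [hXfin] at h1
    omega
  -- ψ and U
  set ψ := π.comp θ with hψ
  have hψinj : Function.Injective ψ := by
    rw [← LinearMap.ker_eq_bot, LinearMap.ker_eq_bot']
    intro y hy
    have hmem : θ y ∈ 𝒞 := by
      have : π (θ y) = 0 := hy
      rwa [hπ, Submodule.mkQ_apply, Submodule.Quotient.mk_eq_zero] at this
    have hzero : θ y = 0 := by
      by_contra hne
      have hge := hdist _ hmem hne
      have hle := hθsrk y
      omega
    have : θ y = θ 0 := by rw [hzero, map_zero]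
    exact hθinj this
  set U := LinearMap.range ψ with hU
  have hfrU : finrank F U = (d - 3) * mm := by
    rw [hU, LinearMap.finrank_range_of_inj hψinj]
    rw [Module.finrank_prod, Module.finrank_pi_fintype]
    simp only [Module.finrank_matrix, Module.finrank_self, Finset.sum_const, Finset.card_univ,
      Fintype.card_fin, smul_eq_mul, mul_one]
    have h3 : d - 3 = a * ν + ρ := by omega
    rw [h3]
    ring
  -- second quotient
  set σW := U.mkQ.comp π with hσW
  have hfrW : finrank F (((∀ _ : Fin ℓ, Matrix (Fin mm) (Fin ν) F) ⧸ 𝒞) ⧸ U) = 2 * mm := by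
    have h1 := Submodule.finrank_quotient_add_finrank U
    rw [hfrV, hfrU] at h1
    have h2 : (d - 1) * mm = (d - 3) * mm + 2 * mm := by
      have : d - 1 = (d - 3) + 2 := by omega
      rw [this, add_mul]
    omega
  -- the key lemma
  have KL : ∀ C : (∀ _ : Fin ℓ, Matrix (Fin mm) (Fin ν) F),
      (∀ (i : Fin ℓ) r c, (i : ℕ) < a → C i r c = 0) →
      (∀ (i : Fin ℓ) r (c : Fin ν), (i : ℕ) = a → (c : ℕ) < ρ → C i r c = 0) →
      srk C ≤ 2 → σW C = 0 → C = 0 := by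
    intro C hs1 hs2 hsrk2 hσ0
    have hπCU : π C ∈ U := by
      have : U.mkQ (π C) = 0 := hσ0
      rwa [Submodule.mkQ_apply, Submodule.Quotient.mk_eq_zero] at this
    obtain ⟨y, hy⟩ := hπCU
    have hmem : C - θ y ∈ 𝒞 := by
      have : π (C - θ y) = 0 := by
        rw [map_sub]
        have : π (θ y) = π C := hy
        rw [this, sub_self]
      rwa [hπ, Submodule.mkQ_apply, Submodule.Quotient.mk_eq_zero] at this
    have hCeq : C = θ y := by
      by_contra hne
      have hne' : C - θ y ≠ 0 := sub_ne_zero.mpr hne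
      have hge := hdist _ hmem hne'
      have hle : srk (C - θ y) ≤ 2 + (a * ν + ρ) :=
        le_trans (srk_sub_le _ _) (by have := hθsrk y; omega)
      omega
    funext i
    funext r c
    show C i r c = 0
    rcases lt_trichotomy ((i : ℕ)) a with h | h | h
    · exact hs1 i r c h
    · rcases lt_or_ge ((c : ℕ)) ρ with hc | hc
      · exact hs2 i r c h hc
      · rw [hCeq, happ, dif_neg (by omega), if_pos h]
        exact hPzero _ _ _ hc
    · rw [hCeq, happ, dif_neg (by omega), if_neg (by omega)]
      rfl
  -- the single-block tuples
  set e : Fin ℓ → (Fin mm → F) → (Fin ν → F) → (∀ _ : Fin ℓ, Matrix (Fin mm) (Fin ν) F) :=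
    fun i y x => Pi.single i (Matrix.vecMulVec y x) with he
  have he_same : ∀ i y x, e i y x i = Matrix.vecMulVec y x := by
    intro i y x; rw [he]; exact Pi.single_eq_same i _
  have he_ne : ∀ i y x (i' : Fin ℓ), i' ≠ i → e i y x i' = 0 := by
    intro i y x i' hne; rw [he]; exact Pi.single_eq_of_ne hne _
  have hesrk : ∀ i y x, srk (e i y x) ≤ 1 := by
    intro i y x
    rw [he]
    rw [srk_single (F := F) i (Matrix.vecMulVec y x)]
    exact rank_vecMulVec_le' y x
  -- the goodness predicate
  set G : Fin ℓ × (Fin mm → F) × (Fin ν → F) → Prop :=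
    fun t => a ≤ (t.1 : ℕ) ∧ t.2.1 ≠ 0 ∧ t.2.2 ≠ 0 ∧
      ((t.1 : ℕ) = a → ∀ c : Fin ν, (c : ℕ) < ρ → t.2.2 c = 0) with hG
  have hsupp1 : ∀ t, G t → ∀ (i' : Fin ℓ) r c, (i' : ℕ) < a → e t.1 t.2.1 t.2.2 i' r c = 0 := by
    intro t ht i' r c hi'
    rw [he_ne _ _ _ _ (by intro hcon; rw [hcon] at hi'; omega)]
    rfl
  have hsupp2 : ∀ t, G t → ∀ (i' : Fin ℓ) r (c : Fin ν), (i' : ℕ) = a → (c : ℕ) < ρ →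
      e t.1 t.2.1 t.2.2 i' r c = 0 := by
    intro t ht i' r c hi' hc
    by_cases hii : i' = t.1
    · subst hii
      rw [he_same]
      rw [Matrix.vecMulVec_apply]
      rw [ht.2.2.2 hi' c hc, mul_zero]
    · rw [he_ne _ _ _ _ hii]
      rfl
  have heq_of_im : ∀ t t', G t → G t' → σW (e t.1 t.2.1 t.2.2) = σW (e t'.1 t'.2.1 t'.2.2) →
      e t.1 t.2.1 t.2.2 = e t'.1 t'.2.1 t'.2.2 := by
    intro t t' ht ht' him
    have h0 : σW (e t.1 t.2.1 t.2.2 - e t'.1 t'.2.1 t'.2.2) = 0 := by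
      rw [map_sub, him, sub_self]
    have := KL (e t.1 t.2.1 t.2.2 - e t'.1 t'.2.1 t'.2.2)
      (by intro i r c hi
          simp only [Pi.sub_apply, Matrix.sub_apply]
          rw [hsupp1 t ht i r c hi, hsupp1 t' ht' i r c hi, sub_zero])
      (by intro i r c hi hc
          simp only [Pi.sub_apply, Matrix.sub_apply]
          rw [hsupp2 t ht i r c hi hc, hsupp2 t' ht' i r c hi hc, sub_zero])
      (le_trans (srk_sub_le _ _) (by
          have := hesrk t.1 t.2.1 t.2.2
          have := hesrk t'.1 t'.2.1 t'.2.2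
          omega))
      h0
    exact sub_eq_zero.mp this
  have hene : ∀ t, G t → e t.1 t.2.1 t.2.2 ≠ 0 := by
    intro t ht hcon
    obtain ⟨r₀, hr₀⟩ := Function.ne_iff.mp ht.2.1
    obtain ⟨c₀, hc₀⟩ := Function.ne_iff.mp ht.2.2.1
    have := congrFun hcon t.1
    rw [he_same] at this
    have := congrFun (congrFun this r₀) c₀
    rw [Matrix.vecMulVec_apply] at this
    exact hr₀ (by
      rcases mul_eq_zero.mp this with h | h
      · exact h
      · exact absurd h hc₀)
  have hne0 : ∀ t, G t → σW (e t.1 t.2.1 t.2.2) ≠ 0 := by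
    intro t ht hcon
    exact hene t ht (KL _ (hsupp1 t ht) (hsupp2 t ht)
      (le_trans (hesrk t.1 t.2.1 t.2.2) one_le_two) hcon)
  -- the finset of good triples
  set S : Finset (Fin ℓ × (Fin mm → F) × (Fin ν → F)) := Finset.univ.filter G with hS
  set hmfun : Fin ℓ × (Fin mm → F) × (Fin ν → F) →
      (((∀ _ : Fin ℓ, Matrix (Fin mm) (Fin ν) F) ⧸ 𝒞) ⧸ U) :=
    fun t => σW (e t.1 t.2.1 t.2.2) with hhm
  -- fibers of hmfun on S have at most q - 1 elements
  have hfib : ∀ w ∈ S.image hmfun, (S.filter fun t => hmfun t = w).card ≤ q - 1 := by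
    intro w hw
    obtain ⟨t₀, ht₀S, ht₀w⟩ := Finset.mem_image.mp hw
    have hGt₀ : G t₀ := (Finset.mem_filter.mp ht₀S).2
    obtain ⟨r₀, hr₀⟩ := Function.ne_iff.mp hGt₀.2.1
    obtain ⟨c₀, hc₀⟩ := Function.ne_iff.mp hGt₀.2.2.1
    simp only [Pi.zero_apply] at hr₀ hc₀
    have hkey : ∀ t ∈ S.filter (fun t => hmfun t = w),
        t.1 = t₀.1 ∧ Matrix.vecMulVec t.2.1 t.2.2 = Matrix.vecMulVec t₀.2.1 t₀.2.2 := by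
      intro t htf
      have htS := (Finset.mem_filter.mp htf).1
      have htw := (Finset.mem_filter.mp htf).2
      have hGt : G t := (Finset.mem_filter.mp htS).2
      have heq := heq_of_im t t₀ hGt hGt₀ (htw.trans ht₀w.symm)
      have h1 : t.1 = t₀.1 := by
        by_contra hne
        obtain ⟨r₁, hr₁⟩ := Function.ne_iff.mp hGt.2.1
        obtain ⟨c₁, hc₁⟩ := Function.ne_iff.mp hGt.2.2.1
        simp only [Pi.zero_apply] at hr₁ hc₁
        have h2 := congrFun heq t.1
        rw [he_same, he_ne _ _ _ _ (fun hcon => hne hcon)] at h2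
        have h3 := congrFun (congrFun h2 r₁) c₁
        rw [Matrix.vecMulVec_apply] at h3
        rcases mul_eq_zero.mp h3 with h | h
        · exact hr₁ h
        · exact hc₁ h
      refine ⟨h1, ?_⟩
      have h2 := congrFun heq t.1
      rw [he_same] at h2
      rw [h2, h1, he_same]
    have hcardF : (Finset.univ.erase (0 : F)).card = q - 1 := by
      rw [Finset.card_erase_of_mem (Finset.mem_univ _), Finset.card_univ]
    rw [← hcardF]
    apply Finset.card_le_card_of_injOn (fun t => t.2.2 c₀)
    · intro t htf
      obtain ⟨h1, h2⟩ := hkey t htf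
      have h3 := congrFun (congrFun h2 r₀) c₀
      rw [Matrix.vecMulVec_apply, Matrix.vecMulVec_apply] at h3
      refine Finset.mem_erase.mpr ⟨?_, Finset.mem_univ _⟩
      intro hcon
      rw [show t.2.2 c₀ = 0 from hcon, mul_zero] at h3
      rcases mul_eq_zero.mp h3.symm with h | h
      · exact hr₀ h
      · exact hc₀ h
    · intro t htf t' htf' hgg
      simp only [Finset.coe_filter, Set.mem_setOf_eq] at htf htf'
      have htf2 : t ∈ S.filter (fun t => hmfun t = w) := Finset.mem_filter.mpr ⟨htf.1, htf.2⟩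
      have htf2' : t' ∈ S.filter (fun t => hmfun t = w) := Finset.mem_filter.mpr ⟨htf'.1, htf'.2⟩
      obtain ⟨h1, h2⟩ := hkey t htf2
      obtain ⟨h1', h2'⟩ := hkey t' htf2'
      have hGt : G t := (Finset.mem_filter.mp htf.1).2
      have hGt' : G t' := (Finset.mem_filter.mp htf'.1).2
      have hxc₀ : t.2.2 c₀ ≠ 0 := by
        have h3 := congrFun (congrFun h2 r₀) c₀
        rw [Matrix.vecMulVec_apply, Matrix.vecMulVec_apply] at h3
        intro hcon
        rw [hcon, mul_zero] at h3
        rcases mul_eq_zero.mp h3.symm with h | h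
        · exact hr₀ h
        · exact hc₀ h
      have hy : t.2.1 = t'.2.1 := by
        funext r
        have h3 := congrFun (congrFun h2 r) c₀
        have h3' := congrFun (congrFun h2' r) c₀
        rw [Matrix.vecMulVec_apply, Matrix.vecMulVec_apply] at h3 h3'
        have hgg' : t.2.2 c₀ = t'.2.2 c₀ := hgg
        have : t.2.1 r * t.2.2 c₀ = t'.2.1 r * t.2.2 c₀ := by rw [h3, hgg', h3']
        exact mul_right_cancel₀ hxc₀ this
      obtain ⟨r₁, hr₁⟩ := Function.ne_iff.mp hGt.2.1
      simp only [Pi.zero_apply] at hr₁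
      have hx : t.2.2 = t'.2.2 := by
        funext c
        have h3 := congrFun (congrFun h2 r₁) c
        have h3' := congrFun (congrFun h2' r₁) c
        rw [Matrix.vecMulVec_apply, Matrix.vecMulVec_apply] at h3 h3'
        rw [← hy] at h3'
        have : t.2.1 r₁ * t.2.2 c = t.2.1 r₁ * t'.2.2 c := by rw [h3, h3']
        exact mul_left_cancel₀ hr₁ this
      have : t.1 = t'.1 := h1.trans h1'.symm
      exact Prod.ext this (Prod.ext hy hx)
  -- the injection giving the lower bound on the cardinality of S
  set emb : (Fin (ν - ρ) → F) → (Fin ν → F) :=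
    fun x' c => if hc : ρ ≤ (c : ℕ) then x' ⟨(c : ℕ) - ρ, by have := c.2; omega⟩ else 0 with hemb
  have hembval : ∀ (x' : Fin (ν - ρ) → F) (c' : Fin (ν - ρ)),
      emb x' ⟨ρ + (c' : ℕ), by have := c'.2; omega⟩ = x' c' := by
    intro x' c'
    rw [hemb]
    simp only []
    rw [dif_pos (by simp)]
    congr 1
    apply Fin.ext
    simp
  have hembne : ∀ x' : Fin (ν - ρ) → F, x' ≠ 0 → emb x' ≠ 0 := by
    intro x' hx' hcon
    obtain ⟨c', hc'⟩ := Function.ne_iff.mp hx'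
    simp only [Pi.zero_apply] at hc'
    exact hc' (by rw [← hembval x' c', hcon]; rfl)
  have hembinj : Function.Injective emb := by
    intro x' x'' hxx
    funext c'
    rw [← hembval x' c', ← hembval x'' c', hxx]
  have hembzero : ∀ (x' : Fin (ν - ρ) → F) (c : Fin ν), (c : ℕ) < ρ → emb x' c = 0 := by
    intro x' c hc
    rw [hemb]
    simp only []
    rw [dif_neg (by omega)]
  set Φ : (Fin L × {y : Fin mm → F // y ≠ 0} × {x : Fin ν → F // x ≠ 0}) ⊕
      ({y : Fin mm → F // y ≠ 0} × {x' : Fin (ν - ρ) → F // x' ≠ 0}) →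
      Fin ℓ × (Fin mm → F) × (Fin ν → F) :=
    Sum.elim (fun p => (⟨a + 1 + (p.1 : ℕ), by have := p.1.2; omega⟩, p.2.1.1, p.2.2.1))
      (fun p => (⟨a, haℓ⟩, p.1.1, emb p.2.1)) with hΦ
  have hΦmem : ∀ u, Φ u ∈ S := by
    intro u
    rw [hS, Finset.mem_filter]
    refine ⟨Finset.mem_univ _, ?_⟩
    rcases u with p | p
    · refine ⟨by simp only [hΦ, Sum.elim_inl]; omega, p.2.1.2, p.2.2.2, ?_⟩
      intro hcon
      exfalso
      simp only [hΦ, Sum.elim_inl] at hcon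
      omega
    · refine ⟨by simp [hΦ], p.1.2, hembne _ p.2.2, ?_⟩
      intro _ c hc
      exact hembzero _ c hc
  have hΦinj : Function.Injective Φ := by
    rintro (⟨u1, u2, u3⟩ | ⟨u2, u3⟩) (⟨v1, v2, v3⟩ | ⟨v2, v3⟩) huv <;>
      simp only [hΦ, Sum.elim_inl, Sum.elim_inr, Prod.mk.injEq] at huv
    · obtain ⟨hv1, hv2, hv3⟩ := huv
      have h1 : u1 = v1 := by
        apply Fin.ext
        have := congrArg Fin.val hv1
        simpa using this
      rw [h1, Subtype.ext hv2, Subtype.ext hv3]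
    · exfalso
      have hval : a + 1 + (u1 : ℕ) = a := congrArg Fin.val huv.1
      omega
    · exfalso
      have hval : a = a + 1 + (v1 : ℕ) := congrArg Fin.val huv.1
      omega
    · obtain ⟨_, hv2, hv3⟩ := huv
      rw [Subtype.ext hv2, Subtype.ext (hembinj hv3)]
  have hcardS : L * (q ^ mm - 1) * (q ^ ν - 1) + (q ^ mm - 1) * (q ^ (ν - ρ) - 1) ≤ S.card := by
    have h1 := Finset.card_le_card_of_injOn (s := (Finset.univ : Finset ((Fin L × {y : Fin mm → F // y ≠ 0} × {x : Fin ν → F // x ≠ 0}) ⊕ ({y : Fin mm → F // y ≠ 0} × {x' : Fin (ν - ρ) → F // x' ≠ 0})))) (t := S) Φ (fun u _ => hΦmem u) hΦinj.injOn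
    rw [Finset.card_univ] at h1
    refine le_trans (le_of_eq ?_) h1
    simp only [Fintype.card_sum, Fintype.card_prod, Fintype.card_fin, card_ne_zero_vec,
      ← hq, mul_assoc]
  -- finiteness of the quotient
  have hWfinite : Finite (((∀ _ : Fin ℓ, Matrix (Fin mm) (Fin ν) F) ⧸ 𝒞) ⧸ U) := by
    have hsurj : Function.Surjective ⇑σW := by
      rw [hσW]
      rw [LinearMap.coe_comp]
      exact Function.Surjective.comp (Submodule.mkQ_surjective U) (Submodule.mkQ_surjective 𝒞)
    exact Finite.of_surjective _ hsurj
  letI : Fintype (((∀ _ : Fin ℓ, Matrix (Fin mm) (Fin ν) F) ⧸ 𝒞) ⧸ U) := Fintype.ofFinite _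
  have hcardW : Fintype.card (((∀ _ : Fin ℓ, Matrix (Fin mm) (Fin ν) F) ⧸ 𝒞) ⧸ U) = q ^ (2 * mm) := by
    rw [card_eq_pow_finrank (K := F), hfrW, hq]
  -- final chain
  have hchain1 : S.card ≤ (q - 1) * (S.image hmfun).card :=
    Finset.card_le_mul_card_image S (q - 1) hfib
  have hchain2 : (S.image hmfun).card ≤ q ^ (2 * mm) - 1 := by
    have hsub : S.image hmfun ⊆ Finset.univ.erase 0 := by
      intro w hw
      obtain ⟨t, htS, rfl⟩ := Finset.mem_image.mp hw
      exact Finset.mem_erase.mpr ⟨hne0 t ((Finset.mem_filter.mp htS).2), Finset.mem_univ _⟩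
    calc (S.image hmfun).card ≤ (Finset.univ.erase
        (0 : ((∀ _ : Fin ℓ, Matrix (Fin mm) (Fin ν) F) ⧸ 𝒞) ⧸ U)).card :=
          Finset.card_le_card hsub
      _ = q ^ (2 * mm) - 1 := by
          rw [Finset.card_erase_of_mem (Finset.mem_univ _), Finset.card_univ, hcardW]
  calc L * (q ^ mm - 1) * (q ^ ν - 1) + (q ^ mm - 1) * (q ^ (ν - ρ) - 1) ≤ S.card := hcardS
    _ ≤ (q - 1) * (S.image hmfun).card := hchain1
    _ ≤ (q - 1) * (q ^ (2 * mm) - 1) := Nat.mul_le_mul_left _ hchain2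


/-- **Non-existence bound for MSRD codes.**  If `n₁ = ⋯ = n_ℓ = ν`, `m₁ = ⋯ = m_ℓ = m`, and
there exists an MSRD code of minimum sum-rank distance `d ≥ 3`, then
`ℓ ≤ ⌊(d-3)/ν⌋ + ⌊(q^ν - q^{ν⌊(d-3)/ν⌋ + ν - d + 3} + (q-1)(q^m + 1))/(q^ν - 1)⌋
   ≤ ⌊(d-3)/ν⌋ + 1 + ⌊q^m (q-1)/(q^ν - 1)⌋`. -/
theorem msrd_nonexistence_bound {F : Type*} [Field F] [Fintype F] {ℓ : ℕ}
    (mm ν : ℕ) (hℓ : 0 < ℓ) (hmpos : 0 < mm) (hνpos : 0 < ν) (hνm : ν ≤ mm)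
    (𝒞 : Submodule F (∀ _ : Fin ℓ, Matrix (Fin mm) (Fin ν) F))
    (hMSRD : IsMSRD 𝒞) (d : ℕ) (hd : d = dmin 𝒞) (hd3 : 3 ≤ d) :
    (ℓ : ℤ) ≤ ((d : ℤ) - 3) / ν +
        ((Fintype.card F : ℤ) ^ ν -
            (Fintype.card F : ℤ) ^
              (((ν : ℤ) * (((d : ℤ) - 3) / ν) + ν - d + 3).toNat) +
          ((Fintype.card F : ℤ) - 1) * ((Fintype.card F : ℤ) ^ mm + 1)) /
        ((Fintype.card F : ℤ) ^ ν - 1) ∧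
      ((d : ℤ) - 3) / ν +
        ((Fintype.card F : ℤ) ^ ν -
            (Fintype.card F : ℤ) ^
              (((ν : ℤ) * (((d : ℤ) - 3) / ν) + ν - d + 3).toNat) +
          ((Fintype.card F : ℤ) - 1) * ((Fintype.card F : ℤ) ^ mm + 1)) /
        ((Fintype.card F : ℤ) ^ ν - 1) ≤
      ((d : ℤ) - 3) / ν + 1 +
        (Fintype.card F : ℤ) ^ mm * ((Fintype.card F : ℤ) - 1) /
        ((Fintype.card F : ℤ) ^ ν - 1) := by
  classical
  obtain ⟨j, δ, hδ, hdmin, hdimC⟩ := hMSRD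
  have hq2 : 2 ≤ Fintype.card F := Fintype.one_lt_card
  have hδν : δ ≤ ν - 1 := hδ
  have hjℓ : (j : ℕ) < ℓ := j.2
  have hdj : d = (j : ℕ) * ν + δ + 1 := by
    rw [hd, hdmin, Finset.sum_const, Fin.card_Iio, smul_eq_mul]
  set a := (d - 3) / ν with ha
  set ρ := (d - 3) % ν with hρ
  have hρν : ρ < ν := Nat.mod_lt _ hνpos
  have hdam : ν * a + ρ = d - 3 := by rw [ha, hρ]; exact Nat.div_add_mod (d - 3) ν
  have hda : d = a * ν + ρ + 3 := by rw [Nat.mul_comm]; omega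
  have hdim' : Module.finrank F 𝒞 + (d - 1) * mm = ℓ * (mm * ν) := by
    rw [hdimC, Finset.sum_const, Fin.card_Ici, smul_eq_mul]
    have h1 : δ * mm ≤ (ℓ - (j : ℕ)) * (mm * ν) := by
      calc δ * mm ≤ ν * mm := Nat.mul_le_mul_right _ (by omega)
        _ = 1 * (mm * ν) := by ring
        _ ≤ (ℓ - (j : ℕ)) * (mm * ν) := Nat.mul_le_mul_right _ (by omega)
    have h2 : d - 1 = (j : ℕ) * ν + δ := by omega
    rw [h2]
    zify [h1, (show (j : ℕ) ≤ ℓ by omega)]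
    ring
  have hdist : ∀ C ∈ 𝒞, C ≠ 0 → d ≤ srk C := by
    intro C hC hC0
    rw [hd]
    exact Nat.sInf_le ⟨C, hC, hC0, rfl⟩
  -- integer abbreviations
  have hνZ : ((ν : ℤ)) ≠ 0 := by exact_mod_cast hνpos.ne'
  have hA : ((d : ℤ) - 3) / (ν : ℤ) = (a : ℤ) := by
    have hZ : ((d : ℤ) - 3) = (ρ : ℤ) + (ν : ℤ) * (a : ℤ) := by
      have h1 : (ν : ℤ) * (a : ℤ) = ((a * ν : ℕ) : ℤ) := by push_cast; ring
      rw [h1]; omega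
    rw [hZ, Int.add_mul_ediv_left (ρ : ℤ) (a : ℤ) hνZ,
      Int.ediv_eq_zero_of_lt (by positivity) (by exact_mod_cast hρν), zero_add]
  rw [hA]
  have hE : (((ν : ℤ) * (a : ℤ) + ν - d + 3).toNat) = ν - ρ := by
    have h1 : (ν : ℤ) * (a : ℤ) = ((a * ν : ℕ) : ℤ) := by push_cast; ring
    rw [h1]; omega
  rw [hE]
  have hqZ : (2 : ℤ) ≤ (Fintype.card F : ℤ) := by exact_mod_cast hq2
  set q : ℤ := (Fintype.card F : ℤ) with hqdef
  have hD : (0 : ℤ) < q ^ ν - 1 := by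
    have : (1 : ℤ) < q ^ ν := one_lt_pow₀ (by omega) hνpos.ne'
    omega
  have hpow1 : q ≤ q ^ (ν - ρ) := le_self_pow₀ (by omega) (by omega)
  have hpowνρ : q ^ (ν - ρ) ≤ q ^ ν := pow_le_pow_right₀ (by omega) (by omega)
  have hpowmm : q ^ ν ≤ q ^ mm := pow_le_pow_right₀ (by omega) hνm
  have hmm1 : (0 : ℤ) < q ^ mm - 1 := by
    have : (1 : ℤ) < q ^ mm := one_lt_pow₀ (by omega) hmpos.ne'
    omega
  constructor
  · -- main inequality
    by_cases hcase : ℓ ≤ a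
    · have hN0 : (0 : ℤ) ≤ q ^ ν - q ^ (ν - ρ) + (q - 1) * (q ^ mm + 1) := by
        have h2 : (0 : ℤ) ≤ (q - 1) * (q ^ mm + 1) := by
          apply mul_nonneg (by omega)
          positivity
        omega
      have hQ0 : (0 : ℤ) ≤ (q ^ ν - q ^ (ν - ρ) + (q - 1) * (q ^ mm + 1)) / (q ^ ν - 1) :=
        Int.ediv_nonneg hN0 (by omega)
      have : (ℓ : ℤ) ≤ (a : ℤ) := by exact_mod_cast hcase
      linarith
    · push_neg at hcase
      set L := ℓ - a - 1 with hL
      have hℓeq : ℓ = a + 1 + L := by omega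
      have hcount := main_count 𝒞 a ρ L d hρν hℓeq hda hdist hdim'
      have c1 : 1 ≤ Fintype.card F ^ mm := Nat.one_le_pow _ _ (by omega)
      have c2 : 1 ≤ Fintype.card F ^ ν := Nat.one_le_pow _ _ (by omega)
      have c3 : 1 ≤ Fintype.card F ^ (ν - ρ) := Nat.one_le_pow _ _ (by omega)
      have c4 : 1 ≤ Fintype.card F ^ (2 * mm) := Nat.one_le_pow _ _ (by omega)
      have c5 : 1 ≤ Fintype.card F := by omega
      zify [c1, c2, c3, c4, c5] at hcount
      have h2m : q ^ (2 * mm) = q ^ mm * q ^ mm := by rw [two_mul, pow_add]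
      have e1 : ((L : ℤ) * (q ^ ν - 1) + (q ^ (ν - ρ) - 1)) * (q ^ mm - 1)
          = (L : ℤ) * (q ^ mm - 1) * (q ^ ν - 1) + (q ^ mm - 1) * (q ^ (ν - ρ) - 1) := by
        ring
      have e2 : ((q - 1) * (q ^ mm + 1)) * (q ^ mm - 1) = (q - 1) * (q ^ (2 * mm) - 1) := by
        rw [h2m]; ring
      have hkey : ((L : ℤ) * (q ^ ν - 1) + (q ^ (ν - ρ) - 1)) * (q ^ mm - 1)
          ≤ ((q - 1) * (q ^ mm + 1)) * (q ^ mm - 1) := by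
        rw [e1, e2]; exact hcount
      have hdivided : (L : ℤ) * (q ^ ν - 1) + (q ^ (ν - ρ) - 1) ≤ (q - 1) * (q ^ mm + 1) :=
        le_of_mul_le_mul_right hkey hmm1
      have hstep : ((L : ℤ) + 1) ≤ (q ^ ν - q ^ (ν - ρ) + (q - 1) * (q ^ mm + 1)) / (q ^ ν - 1) := by
        rw [Int.le_ediv_iff_mul_le hD]
        have e3 : ((L : ℤ) + 1) * (q ^ ν - 1) = (L : ℤ) * (q ^ ν - 1) + (q ^ ν - 1) := by ring
        rw [e3]
        linarith
      have hLl : (ℓ : ℤ) = (a : ℤ) + ((L : ℤ) + 1) := by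
        rw [hℓeq]; push_cast; ring
      linarith
  · -- comparison of the two bounds
    have hstep : q ^ ν - q ^ (ν - ρ) + (q - 1) * (q ^ mm + 1) ≤ q ^ mm * (q - 1) + (q ^ ν - 1) := by
      have e4 : (q - 1) * (q ^ mm + 1) = q ^ mm * (q - 1) + (q - 1) := by ring
      linarith
    have h5 : (q ^ mm * (q - 1) + (q ^ ν - 1)) / (q ^ ν - 1)
        = q ^ mm * (q - 1) / (q ^ ν - 1) + 1 := by
      rw [show q ^ mm * (q - 1) + (q ^ ν - 1) = q ^ mm * (q - 1) + (q ^ ν - 1) * 1 by ring,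
        Int.add_mul_ediv_left _ _ (by omega)]
    have h6 := Int.ediv_le_ediv hD hstep
    rw [h5] at h6
    linarith
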